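/- Let (X, ‖·‖) be a Banach space and Y a Fréchet space with seminorms ‖·‖ₙ. Let g : X → Y be continuous, directionally differentiable, with g(0) = 0. Suppose for some ȳ ∈ Y there exist σ > 0 and an open set U ⊇ σB_X such that for every x ∈ U there exists h ∈ X with ‖h‖ ≤ σ and g'(x, h) = ȳ. Then ȳ belongs to the closure of g(σB_X). -/

import Mathlib

open Filter Topology Set

noncomputable section

/-- Directional derivative: `f'(x,h) = lim_{t↓0} (f(x+th) - f(x))/t`. -/
def HasDirDeriv {X Y : Type*} [AddCommGroup X] [Module ℝ X]
    [AddCommGroup Y] [Module ℝ Y] [TopologicalSpace Y]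
    (f : X → Y) (x h : X) (v : Y) : Prop :=
  Filter.Tendsto (fun t : ℝ => t⁻¹ • (f (x + t • h) - f x)) (𝓝[>] (0:ℝ)) (𝓝 v)

set_option maxHeartbeats 2000000 in
theorem stmt7 {X Y : Type*} [NormedAddCommGroup X] [NormedSpace ℝ X] [CompleteSpace X]
    [AddCommGroup Y] [Module ℝ Y] [MetricSpace Y] [CompleteSpace Y]
    (q : ℕ → Seminorm ℝ Y)
    (hdistY : ∀ u v : Y,
      dist u v = ⨆ n : ℕ, (2:ℝ)⁻¹ ^ n * q n (u - v) / (1 + q n (u - v)))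
    (g : X → Y) (hg : Continuous g)
    (hdiff : ∀ x h : X, ∃ v : Y, HasDirDeriv g x h v)
    (hg0 : g 0 = 0)
    (ybar : Y) (σ : ℝ) (hσ : 0 < σ) (U : Set X) (hU : IsOpen U)
    (hUB : Metric.closedBall (0:X) σ ⊆ U)
    (hsurj : ∀ x ∈ U, ∃ h : X, ‖h‖ ≤ σ ∧ HasDirDeriv g x h ybar) :
    ybar ∈ closure (g '' Metric.closedBall (0:X) σ) := by
  classical
  have hq0 : ∀ (n : ℕ) (w : Y), 0 ≤ q n w := fun n w => apply_nonneg (q n) w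
  set f : ℕ → Y → ℝ := fun n w => (2:ℝ)⁻¹ ^ n * q n w / (1 + q n w) with hf
  have hden : ∀ (n : ℕ) (w : Y), (0:ℝ) < 1 + q n w := fun n w => by
    have := hq0 n w; linarith
  have hf0 : ∀ n w, 0 ≤ f n w := fun n w =>
    div_nonneg (mul_nonneg (by positivity) (hq0 n w)) (hden n w).le
  have hfpow : ∀ n w, f n w ≤ (2:ℝ)⁻¹ ^ n := by
    intro n w
    rw [hf]
    simp only
    rw [mul_div_assoc]
    have h1 : q n w / (1 + q n w) ≤ 1 :=
      (div_le_one (hden n w)).2 (by have := hq0 n w; linarith)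
    calc (2:ℝ)⁻¹ ^ n * (q n w / (1 + q n w)) ≤ (2:ℝ)⁻¹ ^ n * 1 := by
          apply mul_le_mul_of_nonneg_left h1 (by positivity)
      _ = (2:ℝ)⁻¹ ^ n := mul_one _
  have hfq : ∀ n w, f n w ≤ q n w := by
    intro n w
    rw [hf]; simp only
    rw [mul_div_assoc]
    have h1 : q n w / (1 + q n w) ≤ q n w := by
      apply div_le_self (hq0 n w) (by have := hq0 n w; linarith)
    calc (2:ℝ)⁻¹ ^ n * (q n w / (1 + q n w)) ≤ 1 * (q n w) := by
          apply mul_le_mul (by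
            apply pow_le_one₀ (by norm_num) (by norm_num)) h1
            (div_nonneg (hq0 n w) (hden n w).le) (by norm_num)
      _ = q n w := one_mul _
  have hfle1 : ∀ n w, f n w ≤ 1 := fun n w =>
    (hfpow n w).trans (pow_le_one₀ (by norm_num) (by norm_num))
  have hbdd : ∀ w, BddAbove (Set.range fun n => f n w) := by
    intro w
    exact ⟨1, by rintro y ⟨n, rfl⟩; exact hfle1 n w⟩
  have hdist0 : ∀ w : Y, dist w 0 = ⨆ n, f n w := by
    intro w
    rw [hdistY]
    simp [hf]
  have hdist_eq : ∀ u v : Y, dist u v = dist (u - v) 0 := by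
    intro u v
    rw [hdistY, hdist0]
  have hterm_le : ∀ (n : ℕ) (w : Y), f n w ≤ dist w 0 := by
    intro n w
    rw [hdist0]
    exact le_ciSup (hbdd w) n
  have hdist_le : ∀ (w : Y) (B : ℝ), (∀ n, f n w ≤ B) → dist w 0 ≤ B := by
    intro w B hB
    rw [hdist0]
    exact ciSup_le hB
  -- seminorm control from metric control
  have hsem : ∀ (N : ℕ) (η : ℝ), 0 < η → ∃ ρ > 0, ∀ w : Y, dist w 0 < ρ →
      ∀ n < N, q n w ≤ η := by
    intro N η hη
    refine ⟨(2:ℝ)⁻¹ ^ N * (η / (1 + η)), by positivity, ?_⟩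
    intro w hw n hn
    have h1 : f n w < (2:ℝ)⁻¹ ^ N * (η / (1 + η)) := lt_of_le_of_lt (hterm_le n w) hw
    have h2 : (2:ℝ)⁻¹ ^ N ≤ (2:ℝ)⁻¹ ^ n :=
      pow_le_pow_of_le_one (by norm_num) (by norm_num) hn.le
    have h3 : (2:ℝ)⁻¹ ^ n * (q n w / (1 + q n w)) < (2:ℝ)⁻¹ ^ n * (η / (1 + η)) := by
      have := mul_le_mul_of_nonneg_right h2 (div_nonneg hη.le (by linarith) : (0:ℝ) ≤ η / (1+η))
      rw [hf] at h1; simp only at h1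
      rw [mul_div_assoc] at h1
      linarith
    have h4 : q n w / (1 + q n w) < η / (1 + η) :=
      lt_of_mul_lt_mul_left h3 (by positivity)
    have h5 : q n w * (1 + η) < η * (1 + q n w) :=
      (div_lt_div_iff₀ (hden n w) (by linarith)).1 h4
    nlinarith [hq0 n w]
  -- the key quantitative statement
  have key : ∀ (N : ℕ) (ε' : ℝ), 0 < ε' → ∃ x : X, ‖x‖ ≤ σ ∧
      ∀ n < N, q n (g x - ybar) ≤ ε' := by
    intro N ε' hε'
    set Q : Y → ℝ := fun w => ∑ n ∈ Finset.range N, q n w with hQdef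
    have hQ0 : ∀ w, 0 ≤ Q w := fun w => Finset.sum_nonneg fun n _ => hq0 n w
    have hQzero : Q 0 = 0 := by simp [hQdef]
    have hQadd : ∀ a b, Q (a + b) ≤ Q a + Q b := by
      intro a b
      rw [hQdef]
      simp only
      rw [← Finset.sum_add_distrib]
      exact Finset.sum_le_sum fun n _ => map_add_le_add (q n) a b
    have hQneg : ∀ a, Q (-a) = Q a := by
      intro a; simp [hQdef]
    have hQsmul : ∀ (c : ℝ) (a : Y), Q (c • a) = |c| * Q a := by
      intro c a
      simp [hQdef, map_smul_eq_mul, Finset.mul_sum]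
    have hQn : ∀ n, n < N → ∀ w, q n w ≤ Q w := by
      intro n hn w
      exact Finset.single_le_sum (fun m _ => hq0 m w) (Finset.mem_range.2 hn)
    have hQsub : ∀ a b, Q a ≤ Q b + Q (a - b) := by
      intro a b
      have := hQadd b (a - b)
      simpa using this
    have hQsub' : ∀ a b, Q (a - b) ≤ Q a + Q b := by
      intro a b
      have := hQadd a (-b)
      simpa [sub_eq_add_neg, hQneg] using this
    have hQdist : ∀ η : ℝ, 0 < η → ∃ ρ > 0, ∀ w : Y, dist w 0 < ρ → Q w ≤ η := by
      intro η hη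
      have hη' : 0 < η / (N + 1) := by positivity
      obtain ⟨ρ, hρ, hρw⟩ := hsem N (η / (N + 1)) hη'
      refine ⟨ρ, hρ, ?_⟩
      intro w hw
      have h1 : Q w ≤ ∑ _n ∈ Finset.range N, η / (N + 1) :=
        Finset.sum_le_sum fun n hn => hρw w hw n (Finset.mem_range.1 hn)
      have h2 : (∑ _n ∈ Finset.range N, η / (N + 1)) = N * (η / (N + 1)) := by
        simp [Finset.sum_const, mul_comm]
      rw [h2] at h1
      have h3 : (N : ℝ) * (η / (N + 1)) ≤ η := by
        rw [mul_div_assoc']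
        rw [div_le_iff₀ (by positivity)]
        nlinarith [Nat.cast_nonneg (α := ℝ) N]
      linarith
    -- the one-step lemma
    have hstep : ∀ x : X, ‖x‖ ≤ σ → ∀ θ : ℝ, 0 < θ → ∃ δ : ℝ, ∃ x' : X,
        0 < δ ∧ δ ≤ θ ∧ ‖x' - x‖ ≤ δ * σ ∧ Q (g x' - g x - δ • ybar) ≤ ε' * δ := by
      intro x hx θ hθ
      have hxU : x ∈ U := hUB (by
        simp only [Metric.mem_closedBall, dist_zero_right]
        exact hx)
      obtain ⟨h, hh, hd⟩ := hsurj x hxU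
      obtain ⟨ρ, hρ, hQρ⟩ := hQdist ε' hε'
      have hev1 : ∀ᶠ t in 𝓝[>] (0:ℝ),
          dist (t⁻¹ • (g (x + t • h) - g x)) ybar < ρ :=
        hd (Metric.ball_mem_nhds _ hρ)
      have hev2 : Set.Ioc (0:ℝ) θ ∈ 𝓝[>] (0:ℝ) :=
        Ioc_mem_nhdsGT_of_mem ⟨le_refl 0, hθ⟩
      obtain ⟨δ, hδ1, hδ2⟩ := (hev1.and hev2).exists
      refine ⟨δ, x + δ • h, hδ2.1, hδ2.2, ?_, ?_⟩
      · have : ‖x + δ • h - x‖ = δ * ‖h‖ := by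
          simp [norm_smul, abs_of_pos hδ2.1]
        rw [this]
        exact mul_le_mul_of_nonneg_left hh hδ2.1.le
      · have hδne : δ ≠ 0 := hδ2.1.ne'
        have heq : g (x + δ • h) - g x - δ • ybar
            = δ • (δ⁻¹ • (g (x + δ • h) - g x) - ybar) := by
          rw [smul_sub, smul_inv_smul₀ hδne]
        rw [heq, hQsmul, abs_of_pos hδ2.1]
        have h1 : Q (δ⁻¹ • (g (x + δ • h) - g x) - ybar) ≤ ε' := by
          apply hQρ
          rw [← hdist_eq]
          exact hδ1
        calc δ * Q (δ⁻¹ • (g (x + δ • h) - g x) - ybar) ≤ δ * ε' :=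
              mul_le_mul_of_nonneg_left h1 hδ2.1.le
          _ = ε' * δ := mul_comm _ _
    -- the chain relation
    set P : ℝ × X → ℝ × X → Prop := fun p p' =>
      p.1 ≤ p'.1 ∧ ‖p'.2 - p.2‖ ≤ (p'.1 - p.1) * σ ∧
      Q (g p'.2 - g p.2 - (p'.1 - p.1) • ybar) ≤ ε' * (p'.1 - p.1) with hPdef
    have hPrefl : ∀ p, P p p := by
      intro p
      refine ⟨le_rfl, by simp, by simp [hQzero]⟩
    have hPtrans : ∀ p p' p'', P p p' → P p' p'' → P p p'' := by
      rintro p p' p'' ⟨h1, h2, h3⟩ ⟨h1', h2', h3'⟩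
      refine ⟨h1.trans h1', ?_, ?_⟩
      · have : p''.2 - p.2 = (p''.2 - p'.2) + (p'.2 - p.2) := by abel
        rw [this]
        calc ‖(p''.2 - p'.2) + (p'.2 - p.2)‖ ≤ ‖p''.2 - p'.2‖ + ‖p'.2 - p.2‖ :=
              norm_add_le _ _
          _ ≤ (p''.1 - p'.1) * σ + (p'.1 - p.1) * σ := add_le_add h2' h2
          _ = (p''.1 - p.1) * σ := by ring
      · have heq : g p''.2 - g p.2 - (p''.1 - p.1) • ybar
            = (g p''.2 - g p'.2 - (p''.1 - p'.1) • ybar)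
              + (g p'.2 - g p.2 - (p'.1 - p.1) • ybar) := by
          have : (p''.1 - p.1) • ybar = (p''.1 - p'.1) • ybar + (p'.1 - p.1) • ybar := by
            rw [← add_smul]; ring_nf
          rw [this]; abel
        rw [heq]
        calc Q _ ≤ Q (g p''.2 - g p'.2 - (p''.1 - p'.1) • ybar)
              + Q (g p'.2 - g p.2 - (p'.1 - p.1) • ybar) := hQadd _ _
          _ ≤ ε' * (p''.1 - p'.1) + ε' * (p'.1 - p.1) := add_le_add h3' h3
          _ = ε' * (p''.1 - p.1) := by ring
    set A : Set (ℝ × X) := {p | p.1 ≤ 1 ∧ P (0, 0) p} with hAdef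
    have hA0 : ((0:ℝ), (0:X)) ∈ A := ⟨zero_le_one, hPrefl _⟩
    have hAt0 : ∀ p ∈ A, 0 ≤ p.1 := fun p hp => hp.2.1
    have hAnorm : ∀ p ∈ A, ‖p.2‖ ≤ σ := by
      rintro p ⟨h1, h2, h3, _⟩
      have h4 : ‖p.2‖ ≤ p.1 * σ := by simpa using h3
      nlinarith
    have hA_step : ∀ p ∈ A, p.1 < 1 → ∃ p', p' ∈ A ∧ P p p' ∧ p.1 < p'.1 := by
      intro p hp hlt
      obtain ⟨δ, x', hδ0, hδθ, hx', hQx'⟩ := hstep p.2 (hAnorm p hp) (1 - p.1) (by linarith)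
      refine ⟨(p.1 + δ, x'), ?_, ?_, by simp [hδ0]⟩
      · constructor
        · simp only; linarith
        · refine hPtrans _ p _ hp.2 ?_
          refine ⟨by simp only; linarith, ?_, ?_⟩
          · simpa [add_sub_cancel_left] using hx'
          · simpa [add_sub_cancel_left] using hQx'
      · refine ⟨by simp only; linarith, ?_, ?_⟩
        · simpa [add_sub_cancel_left] using hx'
        · simpa [add_sub_cancel_left] using hQx'
    set S : ℝ × X → Set ℝ := fun p => {t | ∃ x', (t, x') ∈ A ∧ P p (t, x')} with hSdef
    have hSne : ∀ p ∈ A, p.1 ∈ S p := by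
      intro p hp
      exact ⟨p.2, by simpa using hp, by simpa using hPrefl p⟩
    have hSbdd : ∀ p, BddAbove (S p) := by
      intro p
      exact ⟨1, by rintro t ⟨x', hA', _⟩; exact hA'.1⟩
    set R : ℝ × X → ℝ := fun p => sSup (S p) with hRdef
    have hRge : ∀ p t, t ∈ S p → t ≤ R p := fun p t ht => le_csSup (hSbdd p) ht
    have hnext : ∀ (k : ℕ) (p : {r : ℝ × X // r ∈ A}),
        ∃ p' : {r : ℝ × X // r ∈ A}, P p.1 p'.1 ∧ R p.1 - 1 / (k + 1 : ℝ) < p'.1.1 := by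
      intro k p
      have hpos : (0:ℝ) < 1 / (k + 1 : ℝ) := by positivity
      have hlt : R p.1 - 1 / (k + 1 : ℝ) < R p.1 := by linarith
      obtain ⟨t, ht, hct⟩ := exists_lt_of_lt_csSup ⟨p.1.1, hSne p.1 p.2⟩ hlt
      obtain ⟨x', hA', hP'⟩ := ht
      exact ⟨⟨(t, x'), hA'⟩, hP', hct⟩
    choose F hF1 hF2 using hnext
    set u : ℕ → {r : ℝ × X // r ∈ A} :=
      fun k => Nat.rec ⟨((0:ℝ), (0:X)), hA0⟩ (fun k pk => F k pk) k with hudef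
    have husucc : ∀ k, u (k + 1) = F k (u k) := fun k => rfl
    have hu0 : (u 0).1 = ((0:ℝ), (0:X)) := rfl
    set t : ℕ → ℝ := fun k => (u k).1.1 with htdef
    set xx : ℕ → X := fun k => (u k).1.2 with hxxdef
    have hchain : ∀ k m, k ≤ m → P (u k).1 (u m).1 := by
      intro k m hkm
      induction m, hkm using Nat.le_induction with
      | base => exact hPrefl _
      | succ m hkm ih =>
        refine hPtrans _ _ _ ih ?_
        rw [husucc]
        exact hF1 m (u m)
    have htmono : Monotone t := by
      apply monotone_nat_of_le_succ
      intro k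
      exact (hchain k (k+1) (Nat.le_succ k)).1
    have ht1 : ∀ k, t k ≤ 1 := fun k => (u k).2.1
    have htbdd : BddAbove (Set.range t) := ⟨1, by rintro y ⟨k, rfl⟩; exact ht1 k⟩
    set T : ℝ := ⨆ k, t k with hTdef
    have htT : Tendsto t atTop (𝓝 T) := tendsto_atTop_ciSup htmono htbdd
    have htleT : ∀ k, t k ≤ T := fun k => le_ciSup htbdd k
    have hT1 : T ≤ 1 := ciSup_le ht1
    have hxnorm : ∀ k m, k ≤ m → ‖xx m - xx k‖ ≤ (t m - t k) * σ :=
      fun k m hkm => (hchain k m hkm).2.1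
    have hxc : CauchySeq xx := by
      rw [Metric.cauchySeq_iff']
      intro η hη
      have hησ : 0 < η / σ := by positivity
      have hev : ∀ᶠ k in atTop, T - η / σ < t k :=
        htT.eventually (eventually_gt_nhds (by linarith))
      obtain ⟨K, hK⟩ := hev.exists
      refine ⟨K, ?_⟩
      intro m hm
      have h1 : ‖xx m - xx K‖ ≤ (t m - t K) * σ := hxnorm K m hm
      have h2 : t m ≤ T := htleT m
      rw [dist_eq_norm]
      calc ‖xx m - xx K‖ ≤ (t m - t K) * σ := h1
        _ < (η / σ) * σ := by nlinarith
        _ = η := div_mul_cancel₀ η hσ.ne'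
    obtain ⟨xs, hxs⟩ := cauchySeq_tendsto_of_complete hxc
    have hgx : Tendsto (fun m => g (xx m)) atTop (𝓝 (g xs)) :=
      (hg.tendsto xs).comp hxs
    have hPlim : ∀ k, P (u k).1 (T, xs) := by
      intro k
      refine ⟨htleT k, ?_, ?_⟩
      · have h1 : Tendsto (fun m => ‖xx m - xx k‖) atTop (𝓝 ‖xs - xx k‖) :=
          (hxs.sub tendsto_const_nhds).norm
        have h2 : Tendsto (fun m => (t m - t k) * σ) atTop (𝓝 ((T - t k) * σ)) :=
          (htT.sub tendsto_const_nhds).mul_const σ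
        refine le_of_tendsto_of_tendsto h1 h2 ?_
        filter_upwards [eventually_ge_atTop k] with m hm
        exact hxnorm k m hm
      · simp only
        refine le_of_forall_pos_le_add ?_
        intro η hη
        obtain ⟨ρ, hρ, hQρ⟩ := hQdist (η / 2) (by linarith)
        have hev1 : ∀ᶠ m in atTop, dist (g (xx m)) (g xs) < ρ :=
          hgx (Metric.ball_mem_nhds _ hρ)
        have hev2 : ∀ᶠ m in atTop, (T - t m) * Q ybar ≤ η / 2 := by
          have hten : Tendsto (fun m => (T - t m) * Q ybar) atTop (𝓝 0) := by
            have : Tendsto (fun m => T - t m) atTop (𝓝 (T - T)) :=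
              tendsto_const_nhds.sub htT
            rw [sub_self] at this
            simpa using this.mul_const (Q ybar)
          exact hten.eventually (eventually_le_nhds (by linarith))
        obtain ⟨m, ⟨hm1, hm2⟩, hmk⟩ := ((hev1.and hev2).and (eventually_ge_atTop k)).exists
        have ha : Q (g xs - g (xx k) - (T - t k) • ybar)
            ≤ Q (g (xx m) - g (xx k) - (t m - t k) • ybar)
              + Q ((g xs - g (xx k) - (T - t k) • ybar)
                - (g (xx m) - g (xx k) - (t m - t k) • ybar)) := hQsub _ _
        have hdiffeq : (g xs - g (xx k) - (T - t k) • ybar)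
            - (g (xx m) - g (xx k) - (t m - t k) • ybar)
            = (g xs - g (xx m)) - (T - t m) • ybar := by
          have hsm : (T - t k) • ybar - (t m - t k) • ybar = (T - t m) • ybar := by
            rw [← sub_smul]; ring_nf
          rw [← hsm]; abel
        have hb : Q ((g xs - g (xx k) - (T - t k) • ybar)
            - (g (xx m) - g (xx k) - (t m - t k) • ybar)) ≤ η := by
          rw [hdiffeq]
          have h1 : Q (g xs - g (xx m)) ≤ η / 2 := by
            apply hQρ
            rw [← hdist_eq, dist_comm]
            exact hm1
          have h2 : Q ((T - t m) • ybar) ≤ η / 2 := by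
            rw [hQsmul, abs_of_nonneg (by have := htleT m; linarith)]
            exact hm2
          calc Q ((g xs - g (xx m)) - (T - t m) • ybar)
              ≤ Q (g xs - g (xx m)) + Q ((T - t m) • ybar) := hQsub' _ _
            _ ≤ η / 2 + η / 2 := add_le_add h1 h2
            _ = η := by ring
        have hc : Q (g (xx m) - g (xx k) - (t m - t k) • ybar) ≤ ε' * (t m - t k) :=
          (hchain k m hmk).2.2
        have hd : ε' * (t m - t k) ≤ ε' * (T - t k) := by
          have := htleT m
          nlinarith
        linarith
    have hTA : (T, xs) ∈ A := by
      refine ⟨hT1, ?_⟩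
      have := hPlim 0
      rwa [hu0] at this
    have hTeq : T = 1 := by
      by_contra hne
      have hTlt : T < 1 := lt_of_le_of_ne hT1 hne
      obtain ⟨p', hp'A, hp'P, hp'gt⟩ := hA_step _ hTA hTlt
      have hmem : ∀ k, p'.1 ∈ S (u k).1 := by
        intro k
        exact ⟨p'.2, by simpa using hp'A, hPtrans _ _ _ (hPlim k) (by simpa using hp'P)⟩
      have h1 : ∀ k : ℕ, p'.1 ≤ T + 1 / (k + 1 : ℝ) := by
        intro k
        have h2 : p'.1 ≤ R (u k).1 := hRge _ _ (hmem k)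
        have h3 := hF2 k (u k)
        have h4 : t (k + 1) ≤ T := htleT (k + 1)
        have h5 : (u (k+1)).1.1 = t (k+1) := rfl
        rw [husucc] at h5
        rw [h5] at h3
        linarith
      have h6 : Tendsto (fun k : ℕ => T + 1 / (k + 1 : ℝ)) atTop (𝓝 T) := by
        have := tendsto_one_div_add_atTop_nhds_zero_nat (𝕜 := ℝ)
        simpa using tendsto_const_nhds.add this
      have h7 : p'.1 ≤ T := ge_of_tendsto' h6 h1
      linarith
    refine ⟨xs, ?_, ?_⟩
    · have := hAnorm _ hTA
      simpa using this
    · intro n hn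
      have hP01 := hTA.2
      have hQfin : Q (g xs - ybar) ≤ ε' := by
        have h1 := hP01.2.2
        simp only [hg0, sub_zero, one_smul] at h1
        rw [hTeq] at h1
        simpa using h1
      exact (hQn n hn _).trans hQfin
  -- conclude via the metric description
  rw [Metric.mem_closure_iff]
  intro ε hε
  obtain ⟨N, hN⟩ := exists_pow_lt_of_lt_one (show (0:ℝ) < ε/2 by linarith)
    (show (2:ℝ)⁻¹ < 1 by norm_num)
  obtain ⟨x, hx, hqx⟩ := key N (ε / 2) (by linarith)
  refine ⟨g x, ⟨x, by simpa [Metric.mem_closedBall, dist_zero_right] using hx, rfl⟩, ?_⟩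
  rw [dist_comm, hdist_eq]
  have hB : dist (g x - ybar) 0 ≤ max ((2:ℝ)⁻¹ ^ N) (ε / 2) := by
    apply hdist_le
    intro n
    rcases lt_or_ge n N with hn | hn
    · exact le_max_of_le_right ((hfq n _).trans (hqx n hn))
    · exact le_max_of_le_left ((hfpow n _).trans
        (pow_le_pow_of_le_one (by norm_num) (by norm_num) hn))
  have : max ((2:ℝ)⁻¹ ^ N) (ε / 2) < ε := max_lt (by linarith) (by linarith)
  linarith
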